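/- arXiv:2105.04058 — 4 statements merged into one kernel-verified Lean document; each statement's English description precedes it below -/
import Mathlib

section
/- Let n ≥ 2, r ≥ 2 and m > r be integers, let d > 0 and A > 0, and let ψ : ℝⁿ → ℝ be a C^r function with 0 ≤ ψ ≤ 1 such that |∇^j ψ(x)| ≤ A·d^{−j} for all x and all 1 ≤ j ≤ r. Then there exists a constant C = C(n, r, m, A) > 0 such that for every 1 ≤ k ≤ r and every x ∈ ℝⁿ, |∇^k(ψ^m)(x)| ≤ C·d^{−k}·ψ(x)^{m−k}. -/
open MeasureTheory Metric Set
open scoped BigOperators RealInnerProductSpace Topology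

noncomputable section

abbrev Euc (n : ℕ) := EuclideanSpace ℝ (Fin n)

/-- `D^j u` : the partial derivative of `u` corresponding to the multi-index `j`. -/
noncomputable def multiDeriv (n : ℕ) (u : Euc n → ℝ) (j : Fin n → ℕ) (x : Euc n) : ℝ :=
  iteratedFDeriv ℝ (∑ i, j i) u x
    (fun k => ((List.finRange n).flatMap
        (fun i => List.replicate (j i) ((EuclideanSpace.single i (1:ℝ) : Euc n)))).getD k.val 0)

/-- `(Σ_{|j|=s} |D^j u|^p)^{1/p}`, the ℓ^p magnitude of the s-th order partial derivatives. -/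
noncomputable def gradMag (n : ℕ) (p : ℝ) (s : ℕ) (u : Euc n → ℝ) (x : Euc n) : ℝ :=
  (∑ j ∈ Finset.Nat.antidiagonalTuple n s, |multiDeriv n u j x| ^ p) ^ (1/p)

/-- The Laplacian. -/
noncomputable def lap (n : ℕ) (u : Euc n → ℝ) : Euc n → ℝ :=
  fun x => ∑ i : Fin n, iteratedFDeriv ℝ 2 u x (fun _ => EuclideanSpace.single i (1:ℝ))

/-- Iterated Laplacian `Δ^j u`. -/
noncomputable def lapIter (n : ℕ) : ℕ → (Euc n → ℝ) → (Euc n → ℝ)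
  | 0, u => u
  | (j+1), u => lap n (lapIter n j u)

/-- `D_r u · D_r v` where `D_r u = Δ^{r/2} u` (r even) or `∇ Δ^{(r-1)/2} u` (r odd). -/
noncomputable def DrDot (n r : ℕ) (u v : Euc n → ℝ) (x : Euc n) : ℝ :=
  if r % 2 = 0 then lapIter n (r/2) u x * lapIter n (r/2) v x
  else (inner ℝ (gradient (lapIter n (r/2) u) x) (gradient (lapIter n (r/2) v) x) : ℝ)

-- Auxiliary lemma: the bound holds for all m and all k ≤ r (including k = 0),
-- using truncated subtraction in the exponent; proved by induction on m via Leibniz.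
private theorem key (n r : ℕ) (d A : ℝ) (hd : 0 < d) (hA : 0 < A)
    (ψ : EuclideanSpace ℝ (Fin n) → ℝ) (hψ : ContDiff ℝ (r : ℕ∞) ψ)
    (hψ01 : ∀ x, 0 ≤ ψ x ∧ ψ x ≤ 1)
    (hψgrad : ∀ j : ℕ, 1 ≤ j → j ≤ r → ∀ x,
      ‖iteratedFDeriv ℝ j ψ x‖ ≤ A * d ^ (-(j : ℝ))) :
    ∀ m : ℕ, ∃ C > 0, ∀ k : ℕ, k ≤ r → ∀ x,
      ‖iteratedFDeriv ℝ k (fun z => ψ z ^ m) x‖ ≤ C * d ^ (-(k : ℝ)) * ψ x ^ (m - k) := by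
  have hM : (0:ℝ) < max A 1 := lt_of_lt_of_le one_pos (le_max_right A 1)
  have hM1 : (1:ℝ) ≤ max A 1 := le_max_right A 1
  have h2r : (1:ℝ) ≤ 2 ^ r := one_le_pow₀ (by norm_num)
  intro m
  induction m with
  | zero =>
    refine ⟨1, one_pos, fun k hk x => ?_⟩
    have hdk : (0:ℝ) < d ^ (-(k:ℝ)) := Real.rpow_pos_of_pos hd _
    rcases Nat.eq_zero_or_pos k with h0 | h0
    · subst h0
      simp only [pow_zero, Nat.zero_sub, norm_iteratedFDeriv_zero]
      norm_num
    · have hconst : (fun z : EuclideanSpace ℝ (Fin n) => ψ z ^ 0) = fun _ => (1:ℝ) := by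
        funext z; simp
      rw [hconst, iteratedFDeriv_const_of_ne (by omega)]
      have hψ0 := (hψ01 x).1
      have : (0:ℝ) ≤ 1 * d ^ (-(k:ℝ)) * ψ x ^ (0 - k) := by positivity
      simpa using this
  | succ m ih =>
    obtain ⟨C, hC, hIH⟩ := ih
    set B : ℝ := 2 ^ r * C * max A 1 with hB
    have hBpos : 0 < B := by positivity
    have hCB : C ≤ B := by
      calc C = 1 * C * 1 := by ring
        _ ≤ 2 ^ r * C * max A 1 := by
            apply mul_le_mul (mul_le_mul h2r le_rfl hC.le (by positivity)) hM1
              (by norm_num) (by positivity)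
    refine ⟨(r + 1) * B + 1, by positivity, fun k hk x => ?_⟩
    have hψx0 := (hψ01 x).1
    have hψx1 := (hψ01 x).2
    have hdk : (0:ℝ) < d ^ (-(k:ℝ)) := Real.rpow_pos_of_pos hd _
    rcases Nat.eq_zero_or_pos k with h0 | h0
    · subst h0
      simp only [norm_iteratedFDeriv_zero, Nat.sub_zero]
      rw [Real.norm_eq_abs, abs_of_nonneg (by positivity)]
      rw [show (-((0:ℕ):ℝ)) = 0 by norm_num, Real.rpow_zero, mul_one]
      exact le_mul_of_one_le_left (by positivity)
        (le_add_of_nonneg_left (by positivity))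
    · have hfun : (fun z : EuclideanSpace ℝ (Fin n) => ψ z ^ (m + 1))
          = fun z => (ψ z ^ m) * ψ z := by
        funext z; ring
      rw [hfun]
      have hψm : ContDiff ℝ (r : ℕ∞) (fun z => ψ z ^ m) := hψ.pow m
      have hkr : (k : WithTop ℕ∞) ≤ (r : ℕ∞) := by exact_mod_cast Nat.cast_le.mpr hk
      have hmul := norm_iteratedFDeriv_mul_le (𝕜 := ℝ) hψm hψ x hkr
      refine hmul.trans ?_
      have hterm : ∀ i ∈ Finset.range (k + 1),
          (k.choose i : ℝ) * ‖iteratedFDeriv ℝ i (fun z => ψ z ^ m) x‖ *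
            ‖iteratedFDeriv ℝ (k - i) ψ x‖
          ≤ B * d ^ (-(k:ℝ)) * ψ x ^ (m + 1 - k) := by
        intro i hi
        rw [Finset.mem_range] at hi
        have hik : i ≤ k := by omega
        have hchoose : (k.choose i : ℝ) ≤ 2 ^ r := by
          have h1 : k.choose i ≤ 2 ^ k := by
            calc k.choose i ≤ ∑ j ∈ Finset.range (k + 1), k.choose j :=
                  Finset.single_le_sum (fun _ _ => Nat.zero_le _) (Finset.mem_range.mpr hi)
              _ = 2 ^ k := Nat.sum_range_choose k
          calc (k.choose i : ℝ) ≤ (2:ℝ) ^ k := by exact_mod_cast h1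
            _ ≤ 2 ^ r := pow_le_pow_right₀ (by norm_num) hk
        have hIHi := hIH i (le_trans hik hk) x
        rcases eq_or_lt_of_le hik with heq | hlt
        · -- i = k
          subst heq
          rw [Nat.sub_self, Nat.choose_self, norm_iteratedFDeriv_zero, Real.norm_eq_abs,
            abs_of_nonneg hψx0, Nat.cast_one, one_mul]
          calc ‖iteratedFDeriv ℝ i (fun z => ψ z ^ m) x‖ * ψ x
              ≤ (C * d ^ (-(i:ℝ)) * ψ x ^ (m - i)) * ψ x :=
                mul_le_mul_of_nonneg_right hIHi hψx0
            _ = C * d ^ (-(i:ℝ)) * (ψ x ^ (m - i) * ψ x) := by ring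
            _ = C * d ^ (-(i:ℝ)) * ψ x ^ (m - i + 1) := by rw [pow_succ]
            _ ≤ B * d ^ (-(i:ℝ)) * ψ x ^ (m + 1 - i) := by
                apply mul_le_mul (mul_le_mul_of_nonneg_right hCB
                  (Real.rpow_pos_of_pos hd _).le)
                  (pow_le_pow_of_le_one hψx0 hψx1 (by omega)) (by positivity) (by positivity)
        · -- i < k
          have hki1 : 1 ≤ k - i := by omega
          have hkir : k - i ≤ r := by omega
          have hgrad := hψgrad (k - i) hki1 hkir x
          have hcast : ((k - i : ℕ) : ℝ) = (k:ℝ) - (i:ℝ) := by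
            push_cast [Nat.cast_sub hik]; ring
          calc (k.choose i : ℝ) * ‖iteratedFDeriv ℝ i (fun z => ψ z ^ m) x‖ *
                ‖iteratedFDeriv ℝ (k - i) ψ x‖
              ≤ (2 ^ r) * (C * d ^ (-(i:ℝ)) * ψ x ^ (m - i)) * (A * d ^ (-((k - i : ℕ):ℝ))) := by
                apply mul_le_mul (mul_le_mul hchoose hIHi (norm_nonneg _) (by positivity))
                  hgrad (norm_nonneg _) (by positivity)
            _ = (2 ^ r * C * A) * (d ^ (-(i:ℝ)) * d ^ (-((k - i : ℕ):ℝ))) * ψ x ^ (m - i) := by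
                ring
            _ = (2 ^ r * C * A) * d ^ (-(k:ℝ)) * ψ x ^ (m - i) := by
                rw [← Real.rpow_add hd, hcast,
                  show (-(i:ℝ)) + -((k:ℝ) - (i:ℝ)) = -(k:ℝ) by ring]
            _ ≤ B * d ^ (-(k:ℝ)) * ψ x ^ (m + 1 - k) := by
                apply mul_le_mul (mul_le_mul_of_nonneg_right
                  (by apply mul_le_mul_of_nonneg_left (le_max_left A 1) (by positivity)) hdk.le)
                  (pow_le_pow_of_le_one hψx0 hψx1 (by omega)) (by positivity) (by positivity)
      calc ∑ i ∈ Finset.range (k + 1), (k.choose i : ℝ) *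
            ‖iteratedFDeriv ℝ i (fun z => ψ z ^ m) x‖ * ‖iteratedFDeriv ℝ (k - i) ψ x‖
          ≤ ∑ _i ∈ Finset.range (k + 1), B * d ^ (-(k:ℝ)) * ψ x ^ (m + 1 - k) :=
            Finset.sum_le_sum hterm
        _ = ((k:ℝ) + 1) * (B * d ^ (-(k:ℝ)) * ψ x ^ (m + 1 - k)) := by
            rw [Finset.sum_const, Finset.card_range]; push_cast; ring
        _ ≤ ((r:ℝ) + 1) * (B * d ^ (-(k:ℝ)) * ψ x ^ (m + 1 - k)) := by
            apply mul_le_mul_of_nonneg_right (by exact_mod_cast Nat.succ_le_succ hk)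
              (by positivity)
        _ = ((r:ℝ) + 1) * B * (d ^ (-(k:ℝ)) * ψ x ^ (m + 1 - k)) := by ring
        _ ≤ ((r:ℝ) + 1) * B * (d ^ (-(k:ℝ)) * ψ x ^ (m + 1 - k)) +
              1 * (d ^ (-(k:ℝ)) * ψ x ^ (m + 1 - k)) :=
            le_add_of_nonneg_right (by positivity)
        _ = ((r + 1) * B + 1) * d ^ (-(k:ℝ)) * ψ x ^ (m + 1 - k) := by push_cast; ring


/-- Gradient bound for powers of a cut-off function: if `0 ≤ ψ ≤ 1` is `C^r` with
`|∇^j ψ| ≤ A d^{-j}` for `1 ≤ j ≤ r`, then for `m > r` there is `C = C(n,r,m,A) > 0` with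
`|∇^k (ψ^m)| ≤ C d^{-k} ψ^{m-k}` for all `1 ≤ k ≤ r`. -/
theorem statement1 (n r m : ℕ) (hn : 2 ≤ n) (hr : 2 ≤ r) (hm : r < m)
    (d A : ℝ) (hd : 0 < d) (hA : 0 < A)
    (ψ : Euc n → ℝ) (hψ : ContDiff ℝ (r : ℕ∞) ψ)
    (hψ01 : ∀ x, 0 ≤ ψ x ∧ ψ x ≤ 1)
    (hψgrad : ∀ j : ℕ, 1 ≤ j → j ≤ r → ∀ x,
      ‖iteratedFDeriv ℝ j ψ x‖ ≤ A * d ^ (-(j : ℝ))) :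
    ∃ C > 0, ∀ k : ℕ, 1 ≤ k → k ≤ r → ∀ x,
      ‖iteratedFDeriv ℝ k (fun z => ψ z ^ m) x‖ ≤ C * d ^ (-(k : ℝ)) * ψ x ^ (m - k) := by
  obtain ⟨C, hC, h⟩ := key n r d A hd hA ψ hψ hψ01 hψgrad m
  exact ⟨C, hC, fun k _ hk x => h k hk x⟩
end
end

section
/- Let r ≥ 2 be an integer, p ≥ 2 real, and C > 0. Suppose I_0, I_1, …, I_r are nonnegative real numbers such that for every ε ∈ (0,1) and every integer 1 ≤ q ≤ r−1 one has I_q ≤ C·ε^{1−p}·I_{q−1} + ε·I_{q+1}. Then there exists a constant C' > 0, depending only on C, p and r, such that for every ε ∈ (0,1) and every integer 1 ≤ q ≤ r−1: I_q ≤ C'·ε^{1−p^r}·I_0 + ε·I_r. -/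
lemma rpow_div_helper (x y : ℝ) (hx : 0 ≤ x) (hy : 0 ≤ y) (e : ℝ) :
    (x / y) ^ e = x ^ e * y ^ (-e) := by
  rw [Real.div_rpow hx hy, Real.rpow_neg hy, div_eq_mul_inv]

/-- Abstract iteration lemma (Step 2 of the proof of Lemma 2): if nonnegative reals
`I_0, …, I_r` satisfy `I_q ≤ C ε^{1-p} I_{q-1} + ε I_{q+1}` for every `ε ∈ (0,1)` and
`1 ≤ q ≤ r-1`, then there is `C' = C'(C,p,r) > 0` with
`I_q ≤ C' ε^{1-p^r} I_0 + ε I_r` for every `ε ∈ (0,1)` and `1 ≤ q ≤ r-1`. -/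
theorem statement7 (r : ℕ) (hr : 2 ≤ r) (p C : ℝ) (hp : 2 ≤ p) (hC : 0 < C)
    (I : ℕ → ℝ) (hpos : ∀ q ≤ r, 0 ≤ I q)
    (hrec : ∀ ε : ℝ, 0 < ε → ε < 1 → ∀ q : ℕ, 1 ≤ q → q ≤ r - 1 →
      I q ≤ C * ε ^ (1 - p) * I (q - 1) + ε * I (q + 1)) :
    ∃ C' > 0, ∀ ε : ℝ, 0 < ε → ε < 1 → ∀ q : ℕ, 1 ≤ q → q ≤ r - 1 →
      I q ≤ C' * ε ^ (1 - p ^ r) * I 0 + ε * I r := by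
  set C₁ := max C 1 with hC₁def
  have hC₁1 : (1:ℝ) ≤ C₁ := le_max_right _ _
  have hC₁0 : (0:ℝ) < C₁ := lt_of_lt_of_le one_pos hC₁1
  have hrec' : ∀ ε : ℝ, 0 < ε → ε < 1 → ∀ q : ℕ, 1 ≤ q → q ≤ r - 1 →
      I q ≤ C₁ * ε ^ (1 - p) * I (q - 1) + ε * I (q + 1) := by
    intro ε hε0 hε1 q hq1 hq2
    refine (hrec ε hε0 hε1 q hq1 hq2).trans ?_
    have h1 : 0 ≤ ε ^ (1 - p) := Real.rpow_nonneg hε0.le _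
    have h2 : 0 ≤ I (q - 1) := hpos _ (by omega)
    have h3 : C ≤ C₁ := le_max_left _ _
    nlinarith [mul_nonneg h1 h2]
  -- Step claim: for each q in [1, m], I q ≤ K ε^{1-p^q} I 0 + ε I (q+1)
  have S : ∀ m : ℕ, m ≤ r - 1 → ∃ K, 0 < K ∧ ∀ ε : ℝ, 0 < ε → ε < 1 →
      ∀ q : ℕ, 1 ≤ q → q ≤ m → I q ≤ K * ε ^ (1 - p ^ q) * I 0 + ε * I (q + 1) := by
    intro m
    induction m with
    | zero => exact fun _ => ⟨1, one_pos, fun ε _ _ q hq1 hq2 => absurd (hq1.trans hq2) (by omega)⟩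
    | succ n ih =>
      intro hm
      obtain ⟨K, hK0, hKb⟩ := ih (by omega)
      set M : ℝ := 2*C₁*K*(2*C₁)^((p:ℝ)^n-1)*2^((p:ℝ)^(n+1)-(p:ℝ)^n) with hMdef
      have hM0 : 0 < M := by positivity
      refine ⟨K + C₁ + M, by positivity, ?_⟩
      intro ε hε0 hε1 q hq1 hq2
      have hI0 : 0 ≤ I 0 := hpos 0 (by omega)
      have hεpow : 0 ≤ ε ^ (1 - p ^ q) := Real.rpow_nonneg hε0.le _
      rcases Nat.lt_or_ge q (n+1) with hq | hq
      · -- q ≤ n : use ih, enlarge constant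
        have := hKb ε hε0 hε1 q hq1 (by omega)
        nlinarith [mul_nonneg hεpow hI0]
      · -- q = n + 1
        have hqe : q = n + 1 := by omega
        subst hqe
        rcases Nat.eq_zero_or_pos n with hn | hn
        · -- base case q = 1
          subst hn
          have h := hrec' ε hε0 hε1 1 le_rfl (by omega)
          norm_num at h ⊢
          have h1 : 0 ≤ ε ^ (1 - p) := Real.rpow_nonneg hε0.le _
          nlinarith [mul_nonneg h1 hI0]
        · -- inductive step
          set δ : ℝ := ε / 2 with hδdef
          have hδ0 : 0 < δ := by positivity
          have hδ1 : δ < 1 := by rw [hδdef]; linarith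
          have hdp : (0:ℝ) < δ ^ (p-1) := Real.rpow_pos_of_pos hδ0 _
          set η : ℝ := δ ^ (p-1) / (2*C₁) with hηdef
          have hη0 : 0 < η := by positivity
          have hη1 : η < 1 := by
            have h1 : δ ^ (p-1) ≤ 1 := Real.rpow_le_one hδ0.le hδ1.le (by linarith)
            rw [hηdef, div_lt_one (by positivity)]
            linarith
          have h1 : I (n+1) ≤ C₁ * δ ^ (1-p) * I n + δ * I (n+2) := by
            have := hrec' δ hδ0 hδ1 (n+1) (by omega) (by omega)
            simpa using this
          have h2 : I n ≤ K * η ^ (1 - p ^ n) * I 0 + η * I (n+1) := hKb η hη0 hη1 n hn le_rfl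
          have hmul : δ ^ ((1:ℝ)-p) * δ ^ (p-1) = 1 := by
            rw [← Real.rpow_add hδ0]; norm_num
          have hhalf : C₁ * δ ^ (1-p) * η = 1/2 := by
            have hc : C₁ / (2*C₁) = 1/2 := by
              rw [div_eq_div_iff (by positivity) (by norm_num)]; ring
            calc C₁ * δ ^ (1-p) * η = C₁/(2*C₁) * (δ ^ ((1:ℝ)-p) * δ ^ (p-1)) := by
                  rw [hηdef]; ring
              _ = 1/2 := by rw [hmul, hc, mul_one]
          have h3 : C₁ * δ ^ (1-p) * I n
              ≤ C₁ * δ ^ (1-p) * (K * η ^ (1 - p ^ n)) * I 0 + (1/2) * I (n+1) := by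
            calc C₁ * δ ^ (1-p) * I n
                ≤ C₁ * δ ^ (1-p) * (K * η ^ (1 - p ^ n) * I 0 + η * I (n+1)) := by
                  apply mul_le_mul_of_nonneg_left h2 (by positivity)
              _ = C₁ * δ ^ (1-p) * (K * η ^ (1 - p ^ n)) * I 0
                    + (C₁ * δ ^ (1-p) * η) * I (n+1) := by ring
              _ = _ := by rw [hhalf]
          have key : I (n+1) ≤ 2 * (C₁ * δ ^ (1-p) * (K * η ^ (1 - p ^ n))) * I 0
              + ε * I (n+2) := by
            have hε2 : ε = 2 * δ := by rw [hδdef]; ring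
            rw [hε2]
            linarith [h1, h3]
          have e1 : η ^ (1 - (p:ℝ) ^ n)
              = δ ^ ((p-1)*(1-(p:ℝ)^n)) * (2*C₁) ^ ((p:ℝ)^n - 1) := by
            rw [hηdef, rpow_div_helper _ _ hdp.le (by positivity),
              ← Real.rpow_mul hδ0.le, neg_sub]
          have e2 : δ ^ ((1:ℝ)-p) * δ ^ ((p-1)*(1-(p:ℝ)^n)) = δ ^ ((p:ℝ)^n - p^(n+1)) := by
            rw [← Real.rpow_add hδ0]; congr 1; ring
          have e3 : δ ^ ((p:ℝ)^n - (p:ℝ)^(n+1))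
              = ε ^ ((p:ℝ)^n - p^(n+1)) * 2 ^ ((p:ℝ)^(n+1) - (p:ℝ)^n) := by
            rw [hδdef, rpow_div_helper _ _ hε0.le (by norm_num), neg_sub]
          have hcoef : 2 * (C₁ * δ ^ (1-p) * (K * η ^ (1 - p ^ n)))
              = M * ε ^ ((p:ℝ)^n - (p:ℝ)^(n+1)) := by
            calc 2 * (C₁ * δ ^ (1-p) * (K * η ^ (1 - p ^ n)))
                = 2*C₁*K*(2*C₁)^((p:ℝ)^n-1) * (δ ^ ((1:ℝ)-p) * δ ^ ((p-1)*(1-(p:ℝ)^n))) := by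
                  rw [e1]; ring
              _ = 2*C₁*K*(2*C₁)^((p:ℝ)^n-1)
                    * (ε ^ ((p:ℝ)^n - p^(n+1)) * 2 ^ ((p:ℝ)^(n+1) - (p:ℝ)^n)) := by
                  rw [e2, e3]
              _ = M * ε ^ ((p:ℝ)^n - (p:ℝ)^(n+1)) := by rw [hMdef]; ring
          have hmono : ε ^ ((p:ℝ)^n - (p:ℝ)^(n+1)) ≤ ε ^ (1 - (p:ℝ)^(n+1)) := by
            apply Real.rpow_le_rpow_of_exponent_ge hε0 hε1.le
            have : (1:ℝ) ≤ p ^ n := one_le_pow₀ (by linarith)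
            linarith
          calc I (n+1) ≤ 2 * (C₁ * δ ^ (1-p) * (K * η ^ (1 - p ^ n))) * I 0
                + ε * I (n+2) := key
            _ = M * ε ^ ((p:ℝ)^n - (p:ℝ)^(n+1)) * I 0 + ε * I (n+2) := by rw [hcoef]
            _ ≤ M * ε ^ (1 - (p:ℝ)^(n+1)) * I 0 + ε * I (n+2) := by
                have h4 := mul_le_mul_of_nonneg_right
                  (mul_le_mul_of_nonneg_left hmono hM0.le) hI0
                linarith
            _ ≤ (K + C₁ + M) * ε ^ (1 - p ^ (n+1)) * I 0 + ε * I (n+2) := by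
                have hb : 0 ≤ ε ^ (1 - (p:ℝ)^(n+1)) := Real.rpow_nonneg hε0.le _
                have h5 := mul_le_mul_of_nonneg_right (mul_le_mul_of_nonneg_right
                  (show M ≤ K + C₁ + M by linarith) hb) hI0
                linarith
  -- Combine: downward induction on distance to r-1
  obtain ⟨K, hK0, hS⟩ := S (r-1) le_rfl
  have hIr : 0 ≤ I r := hpos r le_rfl
  have hI0 : 0 ≤ I 0 := hpos 0 (by omega)
  have U : ∀ n : ℕ, ∃ K', 0 < K' ∧ ∀ ε : ℝ, 0 < ε → ε < 1 → ∀ q : ℕ, 1 ≤ q → q ≤ r-1 →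
      r - 1 - q < n → I q ≤ K' * ε ^ (1 - p^r) * I 0 + ε * I r := by
    intro n
    induction n with
    | zero => exact ⟨1, one_pos, fun ε _ _ q _ _ h => absurd h (by omega)⟩
    | succ n ih =>
      obtain ⟨K', hK'0, hU⟩ := ih
      refine ⟨K' + K, by positivity, ?_⟩
      intro ε hε0 hε1 q hq1 hq2 hqn
      have hS1 := hS ε hε0 hε1 q hq1 hq2
      have hmono : ε ^ (1 - p^q) ≤ ε ^ (1 - p^r) := by
        apply Real.rpow_le_rpow_of_exponent_ge hε0 hε1.le
        have : (p:ℝ)^q ≤ p^r := pow_le_pow_right₀ (by linarith) (by omega)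
        linarith
      have hεr : 0 ≤ ε ^ (1 - p^r) := Real.rpow_nonneg hε0.le _
      by_cases hq : q = r - 1
      · have hq1' : q + 1 = r := by omega
        rw [hq1'] at hS1
        have h3 := mul_le_mul_of_nonneg_right (mul_le_mul_of_nonneg_left hmono hK0.le) hI0
        have h4 := mul_le_mul_of_nonneg_right (mul_le_mul_of_nonneg_right
          (show K ≤ K' + K by linarith) hεr) hI0
        linarith
      · have hU1 := hU ε hε0 hε1 (q+1) (by omega) (by omega) (by omega)
        have hstep : ε * I (q+1) ≤ ε * (K' * ε ^ (1 - p^r) * I 0 + ε * I r) :=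
          mul_le_mul_of_nonneg_left hU1 hε0.le
        rw [mul_add] at hstep
        have h1 : ε * (K' * ε ^ (1 - p^r) * I 0) ≤ K' * ε ^ (1 - p^r) * I 0 := by
          have := mul_le_mul_of_nonneg_right hε1.le
            (mul_nonneg (mul_nonneg hK'0.le hεr) hI0)
          linarith
        have h2 : ε * (ε * I r) ≤ ε * I r := by
          have := mul_le_mul_of_nonneg_right hε1.le (mul_nonneg hε0.le hIr)
          linarith
        have h3 := mul_le_mul_of_nonneg_right (mul_le_mul_of_nonneg_left hmono hK0.le) hI0
        have h4 := mul_le_mul_of_nonneg_right (mul_le_mul_of_nonneg_right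
          (show K ≤ K' + K by linarith) hεr) hI0
        linarith
  obtain ⟨K', hK'0, hU⟩ := U r
  exact ⟨K', hK'0, fun ε hε0 hε1 q hq1 hq2 => hU ε hε0 hε1 q hq1 hq2 (by omega)⟩
end

section
/- Let Ω ⊆ ℝⁿ be open and let f : Ω × ℝ → ℝ be continuous with continuous partial derivative f'(x,s) = ∂f/∂s(x,s). Let s₀ > 0, c₁ > 1 and 1 < p₁ ≤ p₂ be constants, set F(x,s) = ∫₀^s f(x,t) dt, and assume: (h1) f'(x,s)s² ≥ p₁ f(x,s)s for all x ∈ Ω and |s| > s₀; (h2) (p₂+1)F(x,s) ≥ f(x,s)s for all x ∈ Ω and |s| > s₀; (h4) |f'(x,s)| ≤ c₁ for all x ∈ Ω and |s| ≤ s₀, |f(x,0)| ≤ c₁ for all x ∈ Ω, and f(x,s₀) ≥ 1/c₁ and −f(x,−s₀) ≥ 1/c₁ for all x ∈ Ω. Then: (i) there exists C = C(s₀,p₁,p₂,c₁) > 0 such that |f(x,s)|^{(p₂+1)/p₂} ≤ C(|f(x,s)s| + 1) for all (x,s) ∈ Ω × ℝ; and (ii) for every real q > 1 there exists C_q > 0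 such that |f(x,s)|^{q/p₂} ≤ C_q(|s|^q + 1) for all (x,s) ∈ Ω × ℝ. -/
open MeasureTheory Metric Set
open scoped BigOperators RealInnerProductSpace Topology

noncomputable section

lemma aux_pos (g g' : ℝ → ℝ) (hd : ∀ s, HasDerivAt g (g' s) s)
    (s₀ a : ℝ) (ha : 0 < a) (h0 : a ≤ g s₀)
    (hmono : ∀ s, s₀ < s → 0 ≤ g s → 0 ≤ g' s) :
    ∀ s, s₀ ≤ s → a ≤ g s := by
  intro b hb
  have hgc : Continuous g := by
    rw [continuous_iff_continuousAt]; exact fun s => (hd s).continuousAt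
  -- first: g is positive on Icc s₀ b
  have hpos : ∀ s ∈ Icc s₀ b, 0 < g s := by
    by_contra hcon
    push_neg at hcon
    obtain ⟨s₂, hs₂, hgs₂⟩ := hcon
    set Z : Set ℝ := {s ∈ Icc s₀ b | g s ≤ 0} with hZ
    have hZc : IsClosed Z := (isClosed_Icc).inter (isClosed_le hgc continuous_const)
    have hZne : Z.Nonempty := ⟨s₂, hs₂, hgs₂⟩
    have hZbdd : BddBelow Z := ⟨s₀, fun z hz => hz.1.1⟩
    have hmem : sInf Z ∈ Z := hZc.csInf_mem hZne hZbdd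
    set s₁ := sInf Z with hs₁
    have hgs₁ : g s₁ ≤ 0 := hmem.2
    have hs₁mem : s₁ ∈ Icc s₀ b := hmem.1
    have hs₀lt : s₀ < s₁ := by
      rcases lt_or_eq_of_le hs₁mem.1 with h | h
      · exact h
      · exfalso; rw [← h] at hgs₁; linarith
    have hposlt : ∀ s ∈ Ico s₀ s₁, 0 < g s := by
      intro s hs
      by_contra hns
      push_neg at hns
      have : s ∈ Z := ⟨⟨hs.1, le_trans hs.2.le hs₁mem.2⟩, hns⟩
      exact absurd (csInf_le hZbdd this) (not_le.2 hs.2)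
    have hmonoOn : MonotoneOn g (Icc s₀ s₁) := by
      apply monotoneOn_of_hasDerivWithinAt_nonneg (convex_Icc s₀ s₁)
        (hgc.continuousOn) (f' := g')
      · intro x hx
        exact (hd x).hasDerivWithinAt
      · intro x hx
        rw [interior_Icc] at hx
        exact hmono x hx.1 (hposlt x ⟨hx.1.le, hx.2⟩).le
    have := hmonoOn ⟨le_refl s₀, hs₀lt.le⟩ ⟨hs₀lt.le, le_refl s₁⟩ hs₀lt.le
    linarith
  -- now monotone on Icc s₀ b
  have hmonoOn : MonotoneOn g (Icc s₀ b) := by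
    apply monotoneOn_of_hasDerivWithinAt_nonneg (convex_Icc s₀ b)
      (hgc.continuousOn) (f' := g')
    · intro x hx; exact (hd x).hasDerivWithinAt
    · intro x hx
      rw [interior_Icc] at hx
      exact hmono x hx.1 (hpos x ⟨hx.1.le, hx.2.le⟩).le
  calc a ≤ g s₀ := h0
    _ ≤ g b := hmonoOn ⟨le_refl s₀, hb⟩ ⟨hb, le_refl b⟩ hb


lemma aux_upper (g : ℝ → ℝ) (hg : Continuous g) (s₀ p M : ℝ)
    (hs₀ : 0 < s₀) (hp : 0 < p) (hM0 : 0 ≤ M)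
    (hM : ∀ t ∈ Set.Icc (0:ℝ) s₀, |g t| ≤ M)
    (hI : ∀ s, s₀ < s → g s * s ≤ (p + 1) * ∫ t in (0:ℝ)..s, g t) :
    ∀ s, s₀ ≤ s → g s ≤ ((p + 1) * M / s₀ ^ p) * s ^ p := by
  set G : ℝ → ℝ := fun s => ∫ t in (0:ℝ)..s, g t with hGdef
  have hG : ∀ s : ℝ, HasDerivAt G (g s) s := by
    intro s
    exact intervalIntegral.integral_hasDerivAt_right
      (hg.intervalIntegrable 0 s)
      hg.aestronglyMeasurable.stronglyMeasurableAtFilter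
      hg.continuousAt
  have hGs₀ : G s₀ ≤ M * s₀ := by
    have := intervalIntegral.norm_integral_le_of_norm_le_const (C := M) (a := (0:ℝ)) (b := s₀)
      (f := g) ?_
    · calc G s₀ ≤ |G s₀| := le_abs_self _
        _ ≤ M * |s₀ - 0| := this
        _ = M * s₀ := by rw [sub_zero, abs_of_pos hs₀]
    · intro x hx
      rw [Set.uIoc_of_le hs₀.le] at hx
      exact hM x ⟨hx.1.le, hx.2⟩
  -- H s = G s * s ^ (-(p+1)) is antitone on Ici s₀
  set H : ℝ → ℝ := fun s => G s * s ^ (-(p+1)) with hHdef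
  have hHd : ∀ s : ℝ, 0 < s →
      HasDerivAt H (g s * s ^ (-(p+1)) + G s * ((-(p+1)) * s ^ (-(p+1) - 1))) s := by
    intro s hs
    exact (hG s).mul (Real.hasDerivAt_rpow_const (Or.inl hs.ne'))
  have hanti : AntitoneOn H (Ici s₀) := by
    apply antitoneOn_of_hasDerivWithinAt_nonpos (convex_Ici s₀)
      (f' := fun s => g s * s ^ (-(p+1)) + G s * ((-(p+1)) * s ^ (-(p+1) - 1)))
    · intro x hx
      exact ((hHd x (lt_of_lt_of_le hs₀ hx)).continuousAt).continuousWithinAt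
    · intro x hx
      rw [interior_Ici] at hx
      exact (hHd x (lt_trans hs₀ hx)).hasDerivWithinAt
    · intro x hx
      rw [interior_Ici] at hx
      have hx0 : (0:ℝ) < x := lt_trans hs₀ hx
      have key : g x * x ≤ (p + 1) * G x := hI x hx
      have hfac : x ^ (-(p+1) - 1) = x ^ (-(p+1)) / x := by
        rw [Real.rpow_sub hx0, Real.rpow_one]
      have hpow : (0:ℝ) < x ^ (-(p+1)) := Real.rpow_pos_of_pos hx0 _
      rw [hfac]
      have : g x * x ^ (-(p+1)) + G x * (-(p+1) * (x ^ (-(p+1)) / x))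
          = (x ^ (-(p+1)) / x) * (g x * x - (p+1) * G x) := by
        field_simp
        ring
      rw [this]
      apply mul_nonpos_of_nonneg_of_nonpos
      · positivity
      · linarith
  intro s hs
  rcases eq_or_lt_of_le hs with h | h
  · -- s = s₀
    have hg0 : g s₀ ≤ M := (abs_le.1 (hM s₀ ⟨hs₀.le, le_refl _⟩)).2
    have hs₀p : (0:ℝ) < s₀ ^ p := Real.rpow_pos_of_pos hs₀ _
    rw [← h]
    rw [div_mul_eq_mul_div, mul_div_assoc, div_self hs₀p.ne', mul_one]
    nlinarith [mul_nonneg hp.le hM0]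
  · have hHle : H s ≤ H s₀ := hanti (self_mem_Ici) hs hs
    have hspos : (0:ℝ) < s := lt_trans hs₀ h
    have hGle : G s ≤ M * s₀ * (s ^ (p+1) / s₀ ^ (p+1)) := by
      have h1 : G s * s ^ (-(p+1)) ≤ M * s₀ * s₀ ^ (-(p+1)) := by
        calc G s * s ^ (-(p+1)) = H s := rfl
          _ ≤ H s₀ := hHle
          _ = G s₀ * s₀ ^ (-(p+1)) := rfl
          _ ≤ M * s₀ * s₀ ^ (-(p+1)) := by
              apply mul_le_mul_of_nonneg_right hGs₀ (Real.rpow_pos_of_pos hs₀ _).le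
      have h2 := mul_le_mul_of_nonneg_right h1 (Real.rpow_pos_of_pos hspos (p+1)).le
      rw [mul_assoc, ← Real.rpow_add hspos, neg_add_cancel, Real.rpow_zero, mul_one] at h2
      calc G s ≤ M * s₀ * s₀ ^ (-(p+1)) * s ^ (p+1) := h2
        _ = M * s₀ * (s ^ (p+1) / s₀ ^ (p+1)) := by
            rw [Real.rpow_neg hs₀.le]
            ring
    have hkey : g s * s ≤ (p+1) * (M * s₀ * (s ^ (p+1) / s₀ ^ (p+1))) := by
      calc g s * s ≤ (p+1) * G s := hI s h
        _ ≤ (p+1) * (M * s₀ * (s ^ (p+1) / s₀ ^ (p+1))) := by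
            apply mul_le_mul_of_nonneg_left hGle (by linarith)
    have hsp1 : s ^ (p+1) = s ^ p * s := by
      rw [Real.rpow_add hspos, Real.rpow_one]
    have hs₀p1 : s₀ ^ (p+1) = s₀ ^ p * s₀ := by
      rw [Real.rpow_add hs₀, Real.rpow_one]
    have hs₀p : (0:ℝ) < s₀ ^ p := Real.rpow_pos_of_pos hs₀ _
    rw [hsp1, hs₀p1] at hkey
    have : g s * s ≤ ((p + 1) * M / s₀ ^ p) * s ^ p * s := by
      calc g s * s ≤ (p+1) * (M * s₀ * (s ^ p * s / (s₀ ^ p * s₀))) := hkey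
        _ = ((p + 1) * M / s₀ ^ p) * s ^ p * s := by
            field_simp
    exact le_of_mul_le_mul_right this hspos

set_option maxHeartbeats 1000000 in
/-- Lemma 4, point 4: (i) `|f(x,s)|^{(p₂+1)/p₂} ≤ C(|f(x,s)s|+1)`, and
(ii) for each `q > 1`, `|f(x,s)|^{q/p₂} ≤ C_q(|s|^q + 1)`, for all `(x,s) ∈ Ω × ℝ`. -/
theorem statement13
    (n : ℕ) (Ω : Set (Euc n)) (hΩ : IsOpen Ω)
    (f f' : Euc n → ℝ → ℝ)
    (hf : ContinuousOn (fun z : Euc n × ℝ => f z.1 z.2) (Ω ×ˢ (univ : Set ℝ)))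
    (hf' : ContinuousOn (fun z : Euc n × ℝ => f' z.1 z.2) (Ω ×ˢ (univ : Set ℝ)))
    (hderiv : ∀ x ∈ Ω, ∀ s : ℝ, HasDerivAt (f x) (f' x s) s)
    (s₀ c₁ p₁ p₂ : ℝ) (hs₀ : 0 < s₀) (hc₁ : 1 < c₁) (hp₁ : 1 < p₁) (hp₁₂ : p₁ ≤ p₂)
    (h1 : ∀ x ∈ Ω, ∀ s : ℝ, s₀ < |s| → p₁ * (f x s * s) ≤ f' x s * s ^ 2)
    (h2 : ∀ x ∈ Ω, ∀ s : ℝ, s₀ < |s| → f x s * s ≤ (p₂ + 1) * ∫ t in (0:ℝ)..s, f x t)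
    (h4a : ∀ x ∈ Ω, ∀ s : ℝ, |s| ≤ s₀ → |f' x s| ≤ c₁)
    (h4b : ∀ x ∈ Ω, |f x 0| ≤ c₁)
    (h4c : ∀ x ∈ Ω, 1 / c₁ ≤ f x s₀ ∧ 1 / c₁ ≤ -f x (-s₀))
    : (∃ C > 0, ∀ x ∈ Ω, ∀ s : ℝ,
        |f x s| ^ ((p₂ + 1) / p₂) ≤ C * (|f x s * s| + 1))
      ∧ (∀ q : ℝ, 1 < q → ∃ Cq > 0, ∀ x ∈ Ω, ∀ s : ℝ,
        |f x s| ^ (q / p₂) ≤ Cq * (|s| ^ q + 1)) := by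

  have hp₂ : 1 < p₂ := lt_of_lt_of_le hp₁ hp₁₂
  have hp₂0 : (0:ℝ) < p₂ := by linarith
  have hc₁0 : (0:ℝ) < c₁ := by linarith
  have hc₁' : (0:ℝ) < 1 / c₁ := by positivity
  have L1 : ∀ x ∈ Ω, ∀ s : ℝ, |s| ≤ s₀ → |f x s| ≤ c₁ * (1 + s₀) := by
    intro x hx s hs
    have hmvt := Convex.norm_image_sub_le_of_norm_hasDerivWithin_le
      (s := Icc (-s₀) s₀) (f := f x) (f' := f' x) (C := c₁)
      (fun t _ => (hderiv x hx t).hasDerivWithinAt)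
      (fun t ht => by
        rw [Real.norm_eq_abs]
        exact h4a x hx t (abs_le.2 ⟨ht.1, ht.2⟩))
      (convex_Icc _ _)
      (⟨neg_nonpos.2 hs₀.le, hs₀.le⟩ : (0:ℝ) ∈ Icc (-s₀) s₀)
      (abs_le.1 hs)
    rw [Real.norm_eq_abs, Real.norm_eq_abs, sub_zero] at hmvt
    have := h4b x hx
    calc |f x s| ≤ |f x s - f x 0| + |f x 0| := by
          have := abs_sub_abs_le_abs_sub (f x s) (f x 0); linarith [abs_add_le (f x s - f x 0) (f x 0)]
      _ ≤ c₁ * |s| + c₁ := by linarith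
      _ ≤ c₁ * (1 + s₀) := by nlinarith [abs_nonneg s, hs, (by linarith : (0:ℝ) < c₁)]
  have hfc : ∀ x ∈ Ω, Continuous (f x) := by
    intro x hx
    rw [continuous_iff_continuousAt]
    exact fun s => (hderiv x hx s).continuousAt
  -- positivity for s ≥ s₀
  have Lpos : ∀ x ∈ Ω, ∀ s : ℝ, s₀ ≤ s → 1 / c₁ ≤ f x s := by
    intro x hx
    apply aux_pos (f x) (f' x) (hderiv x hx) s₀ _ hc₁' (h4c x hx).1
    intro s hss hfs
    have h := h1 x hx s (by rwa [abs_of_pos (lt_trans hs₀ hss)])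
    have hsp : (0:ℝ) < s := lt_trans hs₀ hss
    have h0 : 0 ≤ f' x s * s ^ 2 := le_trans (mul_nonneg (by linarith) (mul_nonneg hfs hsp.le)) h
    nlinarith [pow_pos hsp 2]
  have Lneg : ∀ x ∈ Ω, ∀ s : ℝ, s₀ ≤ s → 1 / c₁ ≤ -f x (-s) := by
    intro x hx
    have hd : ∀ s : ℝ, HasDerivAt (fun u => -f x (-u)) (f' x (-s)) s := by
      intro s
      have h1 : HasDerivAt (fun u : ℝ => f x (-u)) (f' x (-s) * (-1)) s :=
        (hderiv x hx (-s)).comp s (hasDerivAt_neg s)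
      have := h1.neg
      simp only [mul_neg, mul_one, neg_neg] at this
      exact this
    apply aux_pos _ _ hd s₀ _ hc₁' (h4c x hx).2
    intro s hss hfs
    have hsp : (0:ℝ) < s := lt_trans hs₀ hss
    have h := h1 x hx (-s) (by rwa [abs_neg, abs_of_pos hsp])
    have h0 : 0 ≤ f' x (-s) * (-s) ^ 2 := le_trans (by nlinarith [mul_nonneg hfs hsp.le]) h
    nlinarith [pow_pos (neg_pos.2 (neg_neg s ▸ neg_lt_zero.2 hsp)) 2, sq_nonneg s, pow_pos hsp 2]
  -- upper bounds
  obtain ⟨M, hM⟩ : ∃ M : ℝ, M = c₁ * (1 + s₀) := ⟨_, rfl⟩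
  have hM0 : (0:ℝ) < M := by rw [hM]; positivity
  rw [← hM] at L1
  obtain ⟨K, hK⟩ : ∃ K : ℝ, K = (p₂ + 1) * M / s₀ ^ p₂ := ⟨_, rfl⟩
  have hK0 : (0:ℝ) < K := by
    rw [hK]
    exact div_pos (by positivity) (Real.rpow_pos_of_pos hs₀ _)
  have Lup : ∀ x ∈ Ω, ∀ s : ℝ, s₀ ≤ s → f x s ≤ K * s ^ p₂ := by
    intro x hx
    rw [hK]
    apply aux_upper (f x) (hfc x hx) s₀ p₂ M hs₀ hp₂0 hM0.le
    · intro t ht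
      exact L1 x hx t (by rw [abs_of_nonneg ht.1]; exact ht.2)
    · intro s hss
      exact h2 x hx s (by rwa [abs_of_pos (lt_trans hs₀ hss)])
  have Lup' : ∀ x ∈ Ω, ∀ s : ℝ, s₀ ≤ s → -f x (-s) ≤ K * s ^ p₂ := by
    intro x hx
    rw [hK]
    apply aux_upper (fun u => -f x (-u)) (by continuity) s₀ p₂ M hs₀ hp₂0 hM0.le
    · intro t ht
      have : |(-t)| ≤ s₀ := by rw [abs_neg, abs_of_nonneg ht.1]; exact ht.2
      have := L1 x hx (-t) this
      rw [abs_neg]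
      exact this
    · intro s hss
      have hsp : (0:ℝ) < s := lt_trans hs₀ hss
      have hint : (∫ t in (0:ℝ)..s, -f x (-t)) = ∫ t in (0:ℝ)..(-s), f x t := by
        rw [intervalIntegral.integral_neg]
        rw [intervalIntegral.integral_comp_neg (f x)]
        rw [neg_zero, ← intervalIntegral.integral_symm]
      rw [hint]
      have h := h2 x hx (-s) (by rwa [abs_neg, abs_of_pos hsp])
      nlinarith [h]
  -- combined absolute-value bound
  have Labs : ∀ x ∈ Ω, ∀ s : ℝ, s₀ ≤ |s| → |f x s| ≤ K * |s| ^ p₂ ∧ 1 / c₁ ≤ |f x s| := by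
    intro x hx s hs
    rcases le_or_gt 0 s with h | h
    · have hs' : s₀ ≤ s := by rwa [abs_of_nonneg h] at hs
      have h1 := Lpos x hx s hs'
      have h2 := Lup x hx s hs'
      rw [abs_of_nonneg h, abs_of_pos (lt_of_lt_of_le hc₁' h1)]
      exact ⟨h2, h1⟩
    · have hs' : s₀ ≤ -s := by rwa [abs_of_neg h] at hs
      have h1 := Lneg x hx (-s) hs'
      have h2 := Lup' x hx (-s) hs'
      rw [neg_neg] at h1 h2
      have hneg : f x s < 0 := by nlinarith
      rw [abs_of_neg h, abs_of_neg hneg]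
      exact ⟨h2, h1⟩
  constructor
  · -- part (i)
    refine ⟨M ^ ((p₂ + 1) / p₂) + K ^ ((1:ℝ) / p₂), by positivity, ?_⟩
    intro x hx s
    have hMe : (0:ℝ) < M ^ ((p₂ + 1) / p₂) := Real.rpow_pos_of_pos hM0 _
    have hKe : (0:ℝ) < K ^ ((1:ℝ) / p₂) := Real.rpow_pos_of_pos hK0 _
    have habs : (0:ℝ) ≤ |f x s * s| := abs_nonneg _
    rcases le_or_gt |s| s₀ with hcase | hcase
    · have hb := Real.rpow_le_rpow (z := (p₂ + 1) / p₂) (abs_nonneg (f x s))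
        (L1 x hx s hcase) (by positivity)
      calc |f x s| ^ ((p₂ + 1) / p₂) ≤ M ^ ((p₂ + 1) / p₂) := hb
        _ = M ^ ((p₂ + 1) / p₂) * 1 := (mul_one _).symm
        _ ≤ (M ^ ((p₂ + 1) / p₂) + K ^ ((1:ℝ) / p₂)) * (|f x s * s| + 1) :=
            mul_le_mul (by linarith) (by linarith) (by linarith) (by linarith)
    · obtain ⟨hb, hlb⟩ := Labs x hx s hcase.le
      have hfpos : (0:ℝ) < |f x s| := lt_of_lt_of_le hc₁' hlb
      have e1 : |f x s| ^ ((p₂ + 1) / p₂) = |f x s| * |f x s| ^ ((1:ℝ) / p₂) := by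
        have he : (p₂ + 1) / p₂ = 1 + 1 / p₂ := by field_simp
        rw [he, Real.rpow_add hfpos, Real.rpow_one]
      have e2 : |f x s| ^ ((1:ℝ) / p₂) ≤ K ^ ((1:ℝ) / p₂) * |s| := by
        calc |f x s| ^ ((1:ℝ) / p₂) ≤ (K * |s| ^ p₂) ^ ((1:ℝ) / p₂) :=
              Real.rpow_le_rpow (abs_nonneg _) hb (by positivity)
          _ = K ^ ((1:ℝ) / p₂) * (|s| ^ p₂) ^ ((1:ℝ) / p₂) :=
              Real.mul_rpow hK0.le (Real.rpow_nonneg (abs_nonneg s) _)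
          _ = K ^ ((1:ℝ) / p₂) * |s| := by
              rw [← Real.rpow_mul (abs_nonneg s), mul_one_div, div_self hp₂0.ne',
                Real.rpow_one]
      have e3 : |f x s| * (K ^ ((1:ℝ) / p₂) * |s|) = K ^ ((1:ℝ) / p₂) * |f x s * s| := by
        rw [abs_mul]; ring
      have e4 : |f x s| * |f x s| ^ ((1:ℝ) / p₂) ≤ K ^ ((1:ℝ) / p₂) * |f x s * s| := by
        rw [← e3]
        exact mul_le_mul_of_nonneg_left e2 hfpos.le
      calc |f x s| ^ ((p₂ + 1) / p₂) = |f x s| * |f x s| ^ ((1:ℝ) / p₂) := e1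
        _ ≤ K ^ ((1:ℝ) / p₂) * |f x s * s| := e4
        _ ≤ K ^ ((1:ℝ) / p₂) * (|f x s * s| + 1) :=
            mul_le_mul_of_nonneg_left (by linarith) hKe.le
        _ ≤ (M ^ ((p₂ + 1) / p₂) + K ^ ((1:ℝ) / p₂)) * (|f x s * s| + 1) :=
            mul_le_mul_of_nonneg_right (by linarith) (by linarith)
  · -- part (ii)
    intro q hq
    refine ⟨M ^ (q / p₂) + K ^ (q / p₂), by positivity, ?_⟩
    intro x hx s
    have hMe : (0:ℝ) < M ^ (q / p₂) := Real.rpow_pos_of_pos hM0 _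
    have hKe : (0:ℝ) < K ^ (q / p₂) := Real.rpow_pos_of_pos hK0 _
    have hsq : (0:ℝ) ≤ |s| ^ q := Real.rpow_nonneg (abs_nonneg s) _
    rcases le_or_gt |s| s₀ with hcase | hcase
    · have hb := Real.rpow_le_rpow (z := q / p₂) (abs_nonneg (f x s))
        (L1 x hx s hcase) (by positivity)
      calc |f x s| ^ (q / p₂) ≤ M ^ (q / p₂) := hb
        _ = M ^ (q / p₂) * 1 := (mul_one _).symm
        _ ≤ (M ^ (q / p₂) + K ^ (q / p₂)) * (|s| ^ q + 1) :=
            mul_le_mul (by linarith) (by linarith) (by linarith) (by linarith)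
    · obtain ⟨hb, -⟩ := Labs x hx s hcase.le
      have e2 : |f x s| ^ (q / p₂) ≤ K ^ (q / p₂) * |s| ^ q := by
        calc |f x s| ^ (q / p₂) ≤ (K * |s| ^ p₂) ^ (q / p₂) :=
              Real.rpow_le_rpow (abs_nonneg _) hb (by positivity)
          _ = K ^ (q / p₂) * (|s| ^ p₂) ^ (q / p₂) :=
              Real.mul_rpow hK0.le (Real.rpow_nonneg (abs_nonneg s) _)
          _ = K ^ (q / p₂) * |s| ^ q := by
              rw [← Real.rpow_mul (abs_nonneg s), mul_div_cancel₀ _ hp₂0.ne']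
      calc |f x s| ^ (q / p₂) ≤ K ^ (q / p₂) * |s| ^ q := e2
        _ ≤ K ^ (q / p₂) * (|s| ^ q + 1) := mul_le_mul_of_nonneg_left (by linarith) hKe.le
        _ ≤ (M ^ (q / p₂) + K ^ (q / p₂)) * (|s| ^ q + 1) :=
            mul_le_mul_of_nonneg_right (by linarith) (by linarith)
end
end

section
/- Let n ≥ 2 and r ≥ 2 be integers, let Ω ⊆ ℝⁿ be open, let y ∈ ℝⁿ, and let u : Ω → ℝ be of class C^{r+1}. Then for every x ∈ Ω: D_r u(x) · D_r( z ↦ ∇u(z)·(z−y) )(x) = (1/2)·∇(|D_r u|²)(x)·(x−y) + r·|D_r u(x)|², where the middle term is the directional derivative of the function |D_r u|² in the direction x−y. -/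
open MeasureTheory Metric Set
open scoped BigOperators RealInnerProductSpace Topology

noncomputable section

noncomputable def Dvv (n : ℕ) (v : Euc n) (f : Euc n → ℝ) : Euc n → ℝ := fun z => fderiv ℝ f z v
noncomputable def VyF (n : ℕ) (y : Euc n) (f : Euc n → ℝ) : Euc n → ℝ :=
  fun z => fderiv ℝ f z (z - y)

variable {n : ℕ} {Ω : Set (Euc n)} {y x : Euc n} {f g : Euc n → ℝ}

lemma contDiffAt_Dvv {m : WithTop ℕ∞} {v : Euc n} (hf : ContDiffAt ℝ (m + 1) f x) :
    ContDiffAt ℝ m (Dvv n v f) x :=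
  (hf.fderiv_right le_rfl).clm_apply contDiffAt_const

lemma contDiffAt_VyF {m : WithTop ℕ∞} (hf : ContDiffAt ℝ (m + 1) f x) :
    ContDiffAt ℝ m (VyF n y f) x :=
  (hf.fderiv_right le_rfl).clm_apply (contDiffAt_id.sub contDiffAt_const)

lemma diff_fderiv (hf : ContDiffAt ℝ 2 f x) : DifferentiableAt ℝ (fderiv ℝ f) x :=
  (hf.fderiv_right (m := 1) (by norm_num)).differentiableAt one_ne_zero

lemma diff_Dvv {v : Euc n} (hf : ContDiffAt ℝ 2 f x) : DifferentiableAt ℝ (Dvv n v f) x :=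
  (contDiffAt_Dvv (m := 1) (hf.of_le (by norm_num))).differentiableAt one_ne_zero

lemma diff_VyF (hf : ContDiffAt ℝ 2 f x) : DifferentiableAt ℝ (VyF n y f) x :=
  (contDiffAt_VyF (m := 1) (hf.of_le (by norm_num))).differentiableAt one_ne_zero

lemma fderiv_VyF_apply (hf : ContDiffAt ℝ 2 f x) (w : Euc n) :
    fderiv ℝ (VyF n y f) x w = fderiv ℝ (fderiv ℝ f) x w (x - y) + fderiv ℝ f x w := by
  have h := fderiv_clm_apply (c := fderiv ℝ f) (u := fun z : Euc n => z - y)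
    (diff_fderiv hf) (differentiableAt_id.sub (differentiableAt_const _))
  have h2 : VyF n y f = fun z => (fderiv ℝ f z) ((fun w : Euc n => w - y) z) := rfl
  rw [h2, h]
  simp [fderiv_sub_const, add_comm]

lemma fderiv_Dvv_apply {v : Euc n} (hf : ContDiffAt ℝ 2 f x) (w : Euc n) :
    fderiv ℝ (Dvv n v f) x w = fderiv ℝ (fderiv ℝ f) x w v := by
  have h := fderiv_clm_apply (c := fderiv ℝ f) (u := fun _ : Euc n => v)
    (diff_fderiv hf) (differentiableAt_const _)
  have h2 : Dvv n v f = fun z => (fderiv ℝ f z) ((fun _ : Euc n => v) z) := rfl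
  rw [h2, h]
  simp

lemma Dvv_VyF {v : Euc n} (hf : ContDiffAt ℝ 2 f x) :
    Dvv n v (VyF n y f) x = VyF n y (Dvv n v f) x + Dvv n v f x := by
  have hsym := hf.isSymmSndFDerivAt (by simp)
  show fderiv ℝ (VyF n y f) x v = fderiv ℝ (Dvv n v f) x (x - y) + fderiv ℝ f x v
  rw [fderiv_VyF_apply hf v, fderiv_Dvv_apply hf (x - y), hsym v (x - y)]

lemma lap_eq_sum (hf : ContDiffAt ℝ 2 f x) :
    lap n f x = ∑ i : Fin n,
      Dvv n (EuclideanSpace.single i (1:ℝ)) (Dvv n (EuclideanSpace.single i (1:ℝ)) f) x := by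
  unfold lap
  refine Finset.sum_congr rfl fun i _ => ?_
  rw [iteratedFDeriv_two_apply]
  exact (fderiv_Dvv_apply hf _).symm

lemma eqOn_fderiv (hΩ : IsOpen Ω) (h : EqOn f g Ω) : EqOn (fderiv ℝ f) (fderiv ℝ g) Ω :=
  fun z hz => Filter.EventuallyEq.fderiv_eq (Filter.eventuallyEq_of_mem (hΩ.mem_nhds hz) h)

lemma lap_congr (hΩ : IsOpen Ω) (h : EqOn f g Ω) : EqOn (lap n f) (lap n g) Ω := by
  intro z hz
  have h2 : fderiv ℝ (fderiv ℝ f) z = fderiv ℝ (fderiv ℝ g) z :=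
    Filter.EventuallyEq.fderiv_eq
      (Filter.eventuallyEq_of_mem (hΩ.mem_nhds hz) (eqOn_fderiv hΩ h))
  simp [lap, iteratedFDeriv_two_apply, h2]

lemma lapIter_congr (hΩ : IsOpen Ω) (h : EqOn f g Ω) (j : ℕ) :
    EqOn (lapIter n j f) (lapIter n j g) Ω := by
  induction j with
  | zero => exact h
  | succ j ih => exact lap_congr hΩ ih

lemma lap_add (hΩ : IsOpen Ω) (hf : ContDiffOn ℝ 2 f Ω) (hg : ContDiffOn ℝ 2 g Ω)
    (hx : x ∈ Ω) : lap n (fun z => f z + g z) x = lap n f x + lap n g x := by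
  have hfx : ContDiffAt ℝ 2 f x := hf.contDiffAt (hΩ.mem_nhds hx)
  have hgx : ContDiffAt ℝ 2 g x := hg.contDiffAt (hΩ.mem_nhds hx)
  rw [lap_eq_sum (hfx.add hgx), lap_eq_sum hfx, lap_eq_sum hgx, ← Finset.sum_add_distrib]
  refine Finset.sum_congr rfl fun i _ => ?_
  set v := (EuclideanSpace.single i (1:ℝ) : Euc n)
  have hEq : EqOn (Dvv n v fun z => f z + g z) (fun z => Dvv n v f z + Dvv n v g z) Ω := by
    intro z hz
    have hdf := ((hf.contDiffAt (hΩ.mem_nhds hz)).differentiableAt two_ne_zero)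
    have hdg := ((hg.contDiffAt (hΩ.mem_nhds hz)).differentiableAt two_ne_zero)
    simp [Dvv, fderiv_fun_add hdf hdg]
  show fderiv ℝ (Dvv n v fun z => f z + g z) x v = _
  rw [Filter.EventuallyEq.fderiv_eq (Filter.eventuallyEq_of_mem (hΩ.mem_nhds hx) hEq),
    fderiv_fun_add (diff_Dvv hfx) (diff_Dvv hgx)]
  simp [Dvv]

lemma lap_const_mul (hΩ : IsOpen Ω) (c : ℝ) (hg : ContDiffOn ℝ 2 g Ω) (hx : x ∈ Ω) :
    lap n (fun z => c * g z) x = c * lap n g x := by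
  have hgx : ContDiffAt ℝ 2 g x := hg.contDiffAt (hΩ.mem_nhds hx)
  rw [lap_eq_sum (contDiffAt_const.mul hgx), lap_eq_sum hgx, Finset.mul_sum]
  refine Finset.sum_congr rfl fun i _ => ?_
  set v := (EuclideanSpace.single i (1:ℝ) : Euc n)
  have hEq : EqOn (Dvv n v fun z => c * g z) (fun z => c * Dvv n v g z) Ω := by
    intro z hz
    have hdg := ((hg.contDiffAt (hΩ.mem_nhds hz)).differentiableAt two_ne_zero)
    simp [Dvv, fderiv_const_mul hdg]
  show fderiv ℝ (Dvv n v fun z => c * g z) x v = _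
  rw [Filter.EventuallyEq.fderiv_eq (Filter.eventuallyEq_of_mem (hΩ.mem_nhds hx) hEq),
    fderiv_const_mul (diff_Dvv hgx)]
  simp [Dvv]

lemma contDiffOn_Dvv {m : WithTop ℕ∞} {v : Euc n} (hΩ : IsOpen Ω)
    (hf : ContDiffOn ℝ (m + 1) f Ω) : ContDiffOn ℝ m (Dvv n v f) Ω :=
  fun z hz => (contDiffAt_Dvv (hf.contDiffAt (hΩ.mem_nhds hz))).contDiffWithinAt

lemma contDiffOn_lap {m : WithTop ℕ∞} (hΩ : IsOpen Ω) (hf : ContDiffOn ℝ (m + 2) f Ω) :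
    ContDiffOn ℝ m (lap n f) Ω := by
  have h21 : m + 2 = m + 1 + 1 := by rw [add_assoc]; norm_num
  have hsum : ContDiffOn ℝ m
      (fun x => ∑ i : Fin n,
        Dvv n (EuclideanSpace.single i (1:ℝ)) (Dvv n (EuclideanSpace.single i (1:ℝ)) f) x) Ω := by
    apply ContDiffOn.sum
    intro i _
    exact contDiffOn_Dvv hΩ (contDiffOn_Dvv hΩ (h21 ▸ hf))
  refine hsum.congr fun z hz => ?_
  exact lap_eq_sum ((hf.contDiffAt (hΩ.mem_nhds hz)).of_le (le_add_self))

lemma contDiffOn_lapIter (hΩ : IsOpen Ω) (j : ℕ) {m : WithTop ℕ∞}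
    (hf : ContDiffOn ℝ (m + 2 * j) f Ω) : ContDiffOn ℝ m (lapIter n j f) Ω := by
  induction j generalizing m with
  | zero => simpa [lapIter] using hf
  | succ j ih =>
    show ContDiffOn ℝ m (lap n (lapIter n j f)) Ω
    apply contDiffOn_lap hΩ
    apply ih
    have : m + 2 + 2 * j = m + 2 * (j + 1) := by push_cast; ring
    rw [this]
    exact hf

lemma lap_VyF (hΩ : IsOpen Ω) (hf : ContDiffOn ℝ 3 f Ω) (hx : x ∈ Ω) :
    lap n (VyF n y f) x = VyF n y (lap n f) x + 2 * lap n f x := by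
  have hf2 : ContDiffOn ℝ 2 f Ω := hf.of_le (by norm_num)
  have hfx3 : ContDiffAt ℝ 3 f x := hf.contDiffAt (hΩ.mem_nhds hx)
  have hfx2 : ContDiffAt ℝ 2 f x := hfx3.of_le (by norm_num)
  have hVy2 : ContDiffAt ℝ 2 (VyF n y f) x := contDiffAt_VyF (hfx3.of_le (by norm_num))
  rw [lap_eq_sum hVy2]
  have key : ∀ i : Fin n,
      Dvv n (EuclideanSpace.single i (1:ℝ))
        (Dvv n (EuclideanSpace.single i (1:ℝ)) (VyF n y f)) x
      = VyF n y (Dvv n (EuclideanSpace.single i (1:ℝ))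
          (Dvv n (EuclideanSpace.single i (1:ℝ)) f)) x
        + 2 * Dvv n (EuclideanSpace.single i (1:ℝ))
            (Dvv n (EuclideanSpace.single i (1:ℝ)) f) x := by
    intro i
    set v := (EuclideanSpace.single i (1:ℝ) : Euc n) with hv
    have hEq : EqOn (Dvv n v (VyF n y f)) (fun z => VyF n y (Dvv n v f) z + Dvv n v f z) Ω :=
      fun z hz => Dvv_VyF (hf2.contDiffAt (hΩ.mem_nhds hz))
    have hDf2 : ContDiffAt ℝ 2 (Dvv n v f) x := contDiffAt_Dvv (m := 2) (hfx3.of_le (by norm_num))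
    have step1 : Dvv n v (Dvv n v (VyF n y f)) x
        = fderiv ℝ (fun z => VyF n y (Dvv n v f) z + Dvv n v f z) x v := by
      show fderiv ℝ (Dvv n v (VyF n y f)) x v = _
      rw [Filter.EventuallyEq.fderiv_eq (Filter.eventuallyEq_of_mem (hΩ.mem_nhds hx) hEq)]
    rw [step1, fderiv_fun_add (diff_VyF hDf2) (diff_Dvv hfx2)]
    have step2 : fderiv ℝ (VyF n y (Dvv n v f)) x v = Dvv n v (VyF n y (Dvv n v f)) x := rfl
    have step3 := Dvv_VyF (v := v) (y := y) hDf2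
    simp only [ContinuousLinearMap.add_apply, step2, step3]
    have hr : Dvv n v (Dvv n v f) x = fderiv ℝ (Dvv n v f) x v := rfl
    rw [hr]
    ring
  rw [Finset.sum_congr rfl fun i _ => key i, Finset.sum_add_distrib, ← Finset.mul_sum]
  have hsum : (∑ i : Fin n, VyF n y (Dvv n (EuclideanSpace.single i (1:ℝ))
      (Dvv n (EuclideanSpace.single i (1:ℝ)) f)) x) = VyF n y (lap n f) x := by
    show (∑ i : Fin n, fderiv ℝ (Dvv n (EuclideanSpace.single i (1:ℝ))
      (Dvv n (EuclideanSpace.single i (1:ℝ)) f)) x (x - y)) = fderiv ℝ (lap n f) x (x - y)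
    have hdiff : ∀ i : Fin n, DifferentiableAt ℝ
        (Dvv n (EuclideanSpace.single i (1:ℝ)) (Dvv n (EuclideanSpace.single i (1:ℝ)) f)) x := by
      intro i
      exact (contDiffAt_Dvv (m := 1)
        (contDiffAt_Dvv (m := 2) (hfx3.of_le (by norm_num)))).differentiableAt one_ne_zero
    have h1 := fderiv_fun_sum (u := Finset.univ)
      (A := fun (i : Fin n) => Dvv n (EuclideanSpace.single i (1:ℝ))
        (Dvv n (EuclideanSpace.single i (1:ℝ)) f)) (x := x) (fun i _ => hdiff i)
    have hEq2 : EqOn (fun z => ∑ i : Fin n, Dvv n (EuclideanSpace.single i (1:ℝ))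
        (Dvv n (EuclideanSpace.single i (1:ℝ)) f) z) (lap n f) Ω :=
      fun z hz => (lap_eq_sum (hf2.contDiffAt (hΩ.mem_nhds hz))).symm
    rw [← Filter.EventuallyEq.fderiv_eq (Filter.eventuallyEq_of_mem (hΩ.mem_nhds hx) hEq2),
      h1]
    simp
  rw [hsum, ← lap_eq_sum hfx2]

lemma lapIter_VyF (hΩ : IsOpen Ω) (j : ℕ) (hf : ContDiffOn ℝ (2 * j + 1 : ℕ) f Ω) :
    EqOn (lapIter n j (VyF n y f))
      (fun z => VyF n y (lapIter n j f) z + (2 * j : ℝ) * lapIter n j f z) Ω := by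
  induction j with
  | zero =>
    intro z _
    simp [lapIter]
  | succ j ih =>
    have hle : (2 * j + 1 : ℕ) ≤ (2 * (j + 1) + 1 : ℕ) := by omega
    have hcast : ((2 * j + 1 : ℕ) : WithTop ℕ∞) ≤ ((2 * (j + 1) + 1 : ℕ) : WithTop ℕ∞) :=
      Nat.cast_le.mpr hle
    have hf' : ContDiffOn ℝ (2 * j + 1 : ℕ) f Ω := hf.of_le hcast
    have ihEq := ih hf'
    have hF3 : ContDiffOn ℝ 3 (lapIter n j f) Ω := by
      apply contDiffOn_lapIter hΩ j (m := 3)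
      have : ((3 : WithTop ℕ∞) + 2 * j) = ((2 * (j + 1) + 1 : ℕ) : WithTop ℕ∞) := by
        push_cast; ring
      rw [this]
      exact hf
    have hF2 : ContDiffOn ℝ 2 (lapIter n j f) Ω := hF3.of_le (by norm_num)
    have hVyF2 : ContDiffOn ℝ 2 (VyF n y (lapIter n j f)) Ω := by
      intro z hz
      exact (contDiffAt_VyF (m := 2)
        ((hF3.contDiffAt (hΩ.mem_nhds hz)).of_le (by norm_num))).contDiffWithinAt
    intro z hz
    show lap n (lapIter n j (VyF n y f)) z = _
    rw [lap_congr hΩ ihEq hz,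
      lap_add hΩ hVyF2 (fun w hw => ((contDiffAt_const.mul
        ((hF2.contDiffAt (hΩ.mem_nhds hw)))).contDiffWithinAt) ) hz,
      lap_const_mul hΩ _ hF2 hz, lap_VyF hΩ hF3 hz]
    show _ = VyF n y (lap n (lapIter n j f)) z + (2 * ↑(j + 1) : ℝ) * lap n (lapIter n j f) z
    push_cast
    ring

lemma inner_gradient_eq (f : Euc n → ℝ) (x : Euc n) (w : Euc n) :
    (inner ℝ (gradient f x) w : ℝ) = fderiv ℝ f x w :=
  InnerProductSpace.toDual_symm_apply

lemma gradient_congr (h : f =ᶠ[𝓝 x] g) : gradient f x = gradient g x := by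
  show (InnerProductSpace.toDual ℝ (Euc n)).symm (fderiv ℝ f x)
      = (InnerProductSpace.toDual ℝ (Euc n)).symm (fderiv ℝ g x)
  rw [h.fderiv_eq]

lemma gradient_apply (f : Euc n → ℝ) (z : Euc n) (i : Fin n) :
    gradient f z i = fderiv ℝ f z (EuclideanSpace.single i (1:ℝ)) := by
  rw [← inner_gradient_eq f z (EuclideanSpace.single i (1:ℝ)),
    EuclideanSpace.inner_single_right]
  simp

lemma euclid_decomp (v : Euc n) :
    ∑ i : Fin n, v i • (EuclideanSpace.single i (1:ℝ) : Euc n) = v := by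
  ext j
  rw [WithLp.ofLp_sum, Finset.sum_apply]
  simp [EuclideanSpace.single_apply]

lemma clm_expand (φ : Euc n →L[ℝ] ℝ) (v : Euc n) :
    φ v = ∑ i : Fin n, v i * φ (EuclideanSpace.single i (1:ℝ)) := by
  conv_lhs => rw [← euclid_decomp v]
  rw [map_sum]
  simp

lemma inner_self_grad (f : Euc n → ℝ) (z : Euc n) :
    (inner ℝ (gradient f z) (gradient f z) : ℝ)
      = ∑ i : Fin n, (fderiv ℝ f z (EuclideanSpace.single i (1:ℝ)))^2 := by
  rw [inner_gradient_eq, clm_expand]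
  refine Finset.sum_congr rfl fun i _ => ?_
  rw [gradient_apply]
  ring

lemma fderiv_gradSq {G : Euc n → ℝ} (hG : ContDiffAt ℝ 2 G x) (w : Euc n) :
    fderiv ℝ (fun z => (inner ℝ (gradient G z) (gradient G z) : ℝ)) x w
      = 2 * fderiv ℝ (fderiv ℝ G) x w (gradient G x) := by
  have hEq : (fun z => (inner ℝ (gradient G z) (gradient G z) : ℝ))
      = fun z => ∑ i : Fin n, Dvv n (EuclideanSpace.single i (1:ℝ)) G z
          * Dvv n (EuclideanSpace.single i (1:ℝ)) G z := by
    funext z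
    rw [inner_self_grad]
    refine Finset.sum_congr rfl fun i _ => ?_
    rw [sq]
    rfl
  rw [hEq]
  have hdiff : ∀ i : Fin n, DifferentiableAt ℝ
      (fun z => Dvv n (EuclideanSpace.single i (1:ℝ)) G z
        * Dvv n (EuclideanSpace.single i (1:ℝ)) G z) x :=
    fun i => (diff_Dvv hG).mul (diff_Dvv hG)
  rw [fderiv_fun_sum (fun i _ => hdiff i)]
  rw [ContinuousLinearMap.sum_apply]
  have hterm : ∀ i : Fin n,
      fderiv ℝ (fun z => Dvv n (EuclideanSpace.single i (1:ℝ)) G z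
        * Dvv n (EuclideanSpace.single i (1:ℝ)) G z) x w
      = 2 * (Dvv n (EuclideanSpace.single i (1:ℝ)) G x
          * fderiv ℝ (fderiv ℝ G) x w (EuclideanSpace.single i (1:ℝ))) := by
    intro i
    rw [fderiv_fun_mul (diff_Dvv hG) (diff_Dvv hG)]
    simp only [ContinuousLinearMap.add_apply, ContinuousLinearMap.smul_apply, smul_eq_mul]
    rw [fderiv_Dvv_apply hG]
    ring
  rw [Finset.sum_congr rfl fun i _ => hterm i, ← Finset.mul_sum,
    clm_expand (fderiv ℝ (fderiv ℝ G) x w) (gradient G x)]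
  congr 1
  exact Finset.sum_congr rfl fun i _ => by rw [gradient_apply]; rfl

/-- The Pohozaev-type pointwise identity (21):
`D_r u · D_r(∇u·(·−y)) = ½ ∇(|D_r u|²)·(x−y) + r |D_r u|²` for `u ∈ C^{r+1}(Ω)`. -/
theorem statement15 (n r : ℕ) (hn : 2 ≤ n) (hr : 2 ≤ r)
    (Ω : Set (Euc n)) (hΩ : IsOpen Ω) (y : Euc n)
    (u : Euc n → ℝ) (hu : ContDiffOn ℝ ((r : ℕ∞) + 1) u Ω) :
    ∀ x ∈ Ω,
      DrDot n r u (fun z => (inner ℝ (gradient u z) (z - y) : ℝ)) x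
        = (1 / 2) * fderiv ℝ (fun z => DrDot n r u u z) x (x - y)
          + (r : ℝ) * DrDot n r u u x := by
  intro x hx
  have hu1 : ContDiffOn ℝ (((r + 1 : ℕ)) : WithTop ℕ∞) u Ω := by exact_mod_cast hu
  have hvEq : (fun z => (inner ℝ (gradient u z) (z - y) : ℝ)) = VyF n y u := by
    funext z; exact inner_gradient_eq u z (z - y)
  rcases Nat.even_or_odd r with he | ho
  · -- even case
    obtain ⟨j, hj⟩ := he
    have hj2 : r = 2 * j := by omega
    subst hj2
    have hre : (2 * j) % 2 = 0 := by omega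
    have hdiv : (2 * j) / 2 = j := by omega
    have hu' : ContDiffOn ℝ ((2 * j + 1 : ℕ) : WithTop ℕ∞) u Ω := hu1
    have hF1 : ContDiffOn ℝ 1 (lapIter n j u) Ω := by
      apply contDiffOn_lapIter hΩ j (m := 1)
      have : ((1 : WithTop ℕ∞) + 2 * j) = ((2 * j + 1 : ℕ) : WithTop ℕ∞) := by push_cast; ring
      rw [this]; exact hu'
    have hFd : DifferentiableAt ℝ (lapIter n j u) x :=
      (hF1.contDiffAt (hΩ.mem_nhds hx)).differentiableAt one_ne_zero
    have comm := lapIter_VyF (y := y) hΩ j hu' hx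
    simp only [DrDot, hre, hdiv, if_pos, hvEq]
    simp only [comm]
    rw [fderiv_fun_mul hFd hFd]
    have hVyFF : VyF n y (lapIter n j u) x = fderiv ℝ (lapIter n j u) x (x - y) := rfl
    simp only [ContinuousLinearMap.add_apply, ContinuousLinearMap.smul_apply, smul_eq_mul,
      hVyFF]
    push_cast
    ring
  · -- odd case
    obtain ⟨j, hj⟩ := ho
    subst hj
    have hcond : ¬ ((2 * j + 1) % 2 = 0) := by omega
    have hdiv : (2 * j + 1) / 2 = j := by omega
    have hur : ContDiffOn ℝ ((2 * j + 1 : ℕ) : WithTop ℕ∞) u Ω :=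
      hu1.of_le (Nat.cast_le.mpr (by omega))
    have hG2 : ContDiffOn ℝ 2 (lapIter n j u) Ω := by
      apply contDiffOn_lapIter hΩ j (m := 2)
      have : ((2 : WithTop ℕ∞) + 2 * j) = ((2 * j + 1 + 1 : ℕ) : WithTop ℕ∞) := by
        push_cast; ring
      rw [this]; exact hu1
    have hG2x : ContDiffAt ℝ 2 (lapIter n j u) x := hG2.contDiffAt (hΩ.mem_nhds hx)
    have hGd : DifferentiableAt ℝ (lapIter n j u) x := hG2x.differentiableAt two_ne_zero
    have comm := lapIter_VyF (y := y) hΩ j hur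
    have hgradc : gradient (lapIter n j (VyF n y u)) x
        = gradient (fun z => VyF n y (lapIter n j u) z
            + (2 * (j:ℝ)) * lapIter n j u z) x := by
      apply gradient_congr
      apply Filter.eventuallyEq_of_mem (hΩ.mem_nhds hx)
      intro z hz
      have := comm hz
      simpa using this
    simp only [DrDot, hdiv, if_neg hcond, hvEq]
    rw [hgradc]
    have hkey : (inner ℝ (gradient (lapIter n j u) x)
        (gradient (fun z => VyF n y (lapIter n j u) z + (2 * (j:ℝ)) * lapIter n j u z) x) : ℝ)
        = fderiv ℝ (fun z => VyF n y (lapIter n j u) z + (2 * (j:ℝ)) * lapIter n j u z) x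
            (gradient (lapIter n j u) x) := by
      rw [real_inner_comm]
      exact inner_gradient_eq _ x (gradient (lapIter n j u) x)
    rw [hkey, fderiv_fun_add (diff_VyF hG2x) (hGd.const_mul _),
      fderiv_gradSq hG2x (x - y)]
    simp only [ContinuousLinearMap.add_apply]
    rw [fderiv_const_mul hGd, fderiv_VyF_apply hG2x (gradient (lapIter n j u) x)]
    have hsym := hG2x.isSymmSndFDerivAt (by simp)
    rw [hsym (gradient (lapIter n j u) x) (x - y)]
    have hI : fderiv ℝ (lapIter n j u) x (gradient (lapIter n j u) x)
        = (inner ℝ (gradient (lapIter n j u) x) (gradient (lapIter n j u) x) : ℝ) :=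
      (inner_gradient_eq (lapIter n j u) x (gradient (lapIter n j u) x)).symm
    simp only [ContinuousLinearMap.smul_apply, smul_eq_mul, hI]
    push_cast
    ring
end
end
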